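/- For a tree T ⊆ 2^{<ω} without maximal nodes, an O_i-tower ū = ⟨u_n : n < ω⟩, and x ∈ 2^ω: the cover C(ū) is a subset of lim(T) + x if and only if for every n < ω, u_n ⊆ (T + x), where T + x denotes {t + (x↾|t|) : t ∈ T}. -/

import Mathlib

attribute [local instance] Classical.propDecidable

/-- Finite binary sequences, as lists over `ZMod 2`. -/
abbrev BSeq : Type := List (ZMod 2)

/-- Pad/truncate `ρ` to length exactly `n`. -/
def padTo (ρ : BSeq) (n : ℕ) : BSeq := (ρ ++ List.replicate n 0).take n

theorem padTo_length (ρ : BSeq) (n : ℕ) : (padTo ρ n).length = n := by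
  unfold padTo
  rw [List.length_take, List.length_append, List.length_replicate]
  omega

/-- A level set: a nonempty set of binary sequences, all of one length. -/
structure LSet where
  len : ℕ
  elts : Set BSeq
  ne : elts.Nonempty
  hlen : ∀ x ∈ elts, x.length = len

/-- Translation of a level set by a sequence (of the matching length). -/
def LSet.tr (w : LSet) (ρ : BSeq) : LSet where
  len := w.len
  elts := (fun x => List.zipWith (· + ·) x (padTo ρ w.len)) '' w.elts
  ne := w.ne.image _
  hlen := by
    rintro x ⟨y, hy, rfl⟩
    rw [List.length_zipWith, padTo_length, w.hlen y hy, Nat.min_self]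

/-- Restriction of a level set to a smaller length. -/
def LSet.res (w : LSet) (ℓ : ℕ) (h : ℓ ≤ w.len) : LSet where
  len := ℓ
  elts := (List.take ℓ) '' w.elts
  ne := w.ne.image _
  hlen := by
    rintro x ⟨y, hy, rfl⟩
    rw [List.length_take, w.hlen y hy]
    omega

/-- A simple base (Definition 3.2): a strict partial order on level sets
satisfying clauses (a), (b), (c). -/
structure SimpleBase where
  mem : LSet → Prop
  prec : LSet → LSet → Prop
  prec_mem : ∀ u v, prec u v → mem u ∧ mem v
  irrefl : ∀ u, ¬ prec u u
  trans : ∀ u v w, prec u v → prec v w → prec u w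
  restr : ∀ u v, prec u v → u.len < v.len ∧ u.elts = (List.take u.len) '' v.elts
  ext : ∀ u, mem u → ∃ v, prec u v
  tr_mem : ∀ u ρ, ρ.length = u.len → mem u → mem (u.tr ρ)
  tr_prec : ∀ u v ρ, ρ.length = v.len → prec u v → prec (u.tr (ρ.take u.len)) (v.tr ρ)

/-- An `O`-tower: a `≺`-increasing `ω`-sequence of level sets. -/
def Tower (S : SimpleBase) (u : ℕ → LSet) : Prop := ∀ n, S.prec (u n) (u (n + 1))

/-- Restriction of `η ∈ 2^ω` to a finite length. -/
def resFn (η : ℕ → ZMod 2) (n : ℕ) : BSeq := List.ofFn (fun i : Fin n => η i)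

/-- The cover of a tower. -/
def cover (u : ℕ → LSet) : Set (ℕ → ZMod 2) :=
  {η | ∀ n, resFn η (u n).len ∈ (u n).elts}

/-- A subtree of `2^{<ω}` (closed under initial segments). -/
def IsTree (T : Set BSeq) : Prop := ∀ s ∈ T, ∀ t, t <+: s → t ∈ T

/-- A tree has no maximal nodes. -/
def NoMaxNodes (T : Set BSeq) : Prop := ∀ s ∈ T, ∃ t ∈ T, s <+: t ∧ s ≠ t

/-- The branches of a tree `T ⊆ 2^{<ω}`. -/
def limT (T : Set BSeq) : Set (ℕ → ZMod 2) := {η | ∀ n, resFn η n ∈ T}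

/-- The translated tree `T + x = {t + (x↾|t|) : t ∈ T}`. -/
def TplusX (T : Set BSeq) (x : ℕ → ZMod 2) : Set BSeq :=
  (fun t => List.zipWith (· + ·) t (resFn x t.length)) '' T

/-- Translation of a set of branches: `A + x`. -/
def addX (A : Set (ℕ → ZMod 2)) (x : ℕ → ZMod 2) : Set (ℕ → ZMod 2) :=
  (fun y => fun n => y n + x n) '' A

section Aux

lemma zmod2_aa (a b : ZMod 2) : a + b + b = a := by
  rw [add_assoc, CharTwo.add_self_eq_zero b, add_zero]

lemma zip_invol (t ρ : BSeq) (h : t.length = ρ.length) :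
    List.zipWith (· + ·) (List.zipWith (· + ·) t ρ) ρ = t := by
  apply List.ext_getElem
  · simp [h]
  · intro i h1 h2
    simp [List.getElem_zipWith, zmod2_aa]

lemma resFn_length (η : ℕ → ZMod 2) (n : ℕ) : (resFn η n).length = n := by simp [resFn]

lemma resFn_getElem (η : ℕ → ZMod 2) (n i : ℕ) (h : i < (resFn η n).length) :
    (resFn η n)[i] = η i := by simp [resFn]

lemma resFn_take (η : ℕ → ZMod 2) {a b : ℕ} (h : a ≤ b) :
    resFn η a = (resFn η b).take a := by
  apply List.ext_getElem
  · simp [resFn_length]; omega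
  · intro i h1 h2
    rw [List.getElem_take, resFn_getElem, resFn_getElem]

lemma tower_len_elts (S : SimpleBase) (u : ℕ → LSet) (hu : Tower S u) (k m : ℕ) :
    (u k).len + m ≤ (u (k + m)).len ∧
    (u k).elts = List.take (u k).len '' (u (k + m)).elts := by
  induction m with
  | zero =>
    refine ⟨by simp, ?_⟩
    ext t
    constructor
    · intro ht
      exact ⟨t, ht, List.take_of_length_le (le_of_eq ((u k).hlen t ht))⟩
    · rintro ⟨y, hy, rfl⟩
      rw [List.take_of_length_le (le_of_eq ((u k).hlen y hy))]
      exact hy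
  | succ m ih =>
    obtain ⟨h1, h2⟩ := ih
    obtain ⟨h3, h4⟩ := S.restr _ _ (hu (k + m))
    refine ⟨by show (u k).len + (m + 1) ≤ (u (k + m + 1)).len; omega, ?_⟩
    rw [h2, show k + (m+1) = (k + m) + 1 from rfl, h4, Set.image_image]
    apply Set.image_congr'
    intro y
    rw [List.take_take, min_eq_left (by omega)]

/-- A chain of elements through a sequence of sets related by `take`. -/
noncomputable def chain (L : ℕ → ℕ) (E : ℕ → Set BSeq) (s : BSeq) (hs : s ∈ E 0)
    (step : ∀ m t, t ∈ E m → ∃ t', t' ∈ E (m + 1) ∧ t'.take (L m) = t) :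
    ∀ m, {t // t ∈ E m}
  | 0 => ⟨s, hs⟩
  | (m + 1) =>
    ⟨(step m (chain L E s hs step m).1 (chain L E s hs step m).2).choose,
     (step m (chain L E s hs step m).1 (chain L E s hs step m).2).choose_spec.1⟩

lemma chain_zero (L : ℕ → ℕ) (E : ℕ → Set BSeq) (s : BSeq) (hs : s ∈ E 0)
    (step : ∀ m t, t ∈ E m → ∃ t', t' ∈ E (m + 1) ∧ t'.take (L m) = t) :
    (chain L E s hs step 0).1 = s := rfl

lemma chain_take (L : ℕ → ℕ) (E : ℕ → Set BSeq) (s : BSeq) (hs : s ∈ E 0)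
    (step : ∀ m t, t ∈ E m → ∃ t', t' ∈ E (m + 1) ∧ t'.take (L m) = t) (m : ℕ) :
    ((chain L E s hs step (m + 1)).1).take (L m) = (chain L E s hs step m).1 :=
  (step m (chain L E s hs step m).1 (chain L E s hs step m).2).choose_spec.2

lemma chain_take_le (L : ℕ → ℕ) (E : ℕ → Set BSeq) (s : BSeq) (hs : s ∈ E 0)
    (step : ∀ m t, t ∈ E m → ∃ t', t' ∈ E (m + 1) ∧ t'.take (L m) = t)
    (hlen : ∀ m t, t ∈ E m → t.length = L m) (hL : Monotone L)
    {m j : ℕ} (h : m ≤ j) :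
    ((chain L E s hs step j).1).take (L m) = (chain L E s hs step m).1 := by
  induction j with
  | zero =>
    obtain rfl : m = 0 := Nat.le_zero.mp h
    exact List.take_of_length_le
      (le_of_eq (hlen 0 _ (chain L E s hs step 0).2))
  | succ j ih =>
    rcases Nat.lt_or_ge m (j + 1) with hm | hm
    · have hmj : m ≤ j := Nat.lt_succ_iff.mp hm
      rw [← ih hmj, ← chain_take L E s hs step j, List.take_take,
        min_eq_left (hL hmj)]
    · obtain rfl : m = j + 1 := le_antisymm h hm
      exact List.take_of_length_le
        (le_of_eq (hlen _ _ (chain L E s hs step _).2))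

end Aux

/-- `C(ū) ⊆ lim(T) + x` iff every level of the tower lies in `T + x`. -/
theorem stmt13 (S : SimpleBase) (T : Set BSeq) (hT : IsTree T) (hnm : NoMaxNodes T)
    (u : ℕ → LSet) (hu : Tower S u) (x : ℕ → ZMod 2) :
    cover u ⊆ addX (limT T) x ↔ ∀ n, (u n).elts ⊆ TplusX T x := by
  constructor
  · -- forward direction
    intro hcov n s hs
    set L : ℕ → ℕ := fun m => (u (n + m)).len with hLdef
    set E : ℕ → Set BSeq := fun m => (u (n + m)).elts with hEdef
    have hs0 : s ∈ E 0 := hs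
    have step : ∀ m t, t ∈ E m → ∃ t', t' ∈ E (m + 1) ∧ t'.take (L m) = t := by
      intro m t ht
      obtain ⟨_, h2⟩ := S.restr _ _ (hu (n + m))
      have ht' : t ∈ List.take (u (n + m)).len '' (u (n + m + 1)).elts := by
        rw [← h2]; exact ht
      obtain ⟨t', ht', htt⟩ := ht'
      exact ⟨t', ht', htt⟩
    have hlenE : ∀ m t, t ∈ E m → t.length = L m := fun m t ht => (u (n + m)).hlen t ht
    have hmono : Monotone L := by
      intro a b hab
      have := (tower_len_elts S u hu (n + a) (b - a)).1
      rw [show n + a + (b - a) = n + b by omega] at this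
      simp only [hLdef]
      omega
    have hLgt : ∀ i : ℕ, i < L (i + 1) := by
      intro i
      have := (tower_len_elts S u hu n (i + 1)).1
      simp only [hLdef]
      omega
    set c : ∀ m, {t // t ∈ E m} := chain L E s hs0 step with hcdef
    set η : ℕ → ZMod 2 := fun i => (c (i + 1)).1.getD i 0 with hηdef
    have clen : ∀ m, (c m).1.length = L m := fun m => hlenE m _ (c m).2
    have claimA : ∀ m, resFn η (u (n + m)).len = (c m).1 := by
      intro m
      apply List.ext_getElem
      · rw [resFn_length, clen]
      · intro i h1 h2
        rw [resFn_getElem]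
        show (c (i + 1)).1.getD i 0 = (c m).1[i]
        have hi1 : i < (c (i + 1)).1.length := by rw [clen]; exact hLgt i
        rw [List.getD_eq_getElem _ _ hi1]
        rcases le_total (i + 1) m with hc | hc
        · have hp : (c (i + 1)).1 <+: (c m).1 := by
            rw [← chain_take_le L E s hs0 step hlenE hmono hc]
            exact List.take_prefix _ _
          exact hp.getElem hi1
        · have hp : (c m).1 <+: (c (i + 1)).1 := by
            rw [← chain_take_le L E s hs0 step hlenE hmono hc]
            exact List.take_prefix _ _
          exact (hp.getElem h2).symm
    have hA0 : resFn η (u n).len = s := claimA 0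
    have hηcov : η ∈ cover u := by
      intro k
      rcases le_total n k with hk | hk
      · obtain ⟨m, rfl⟩ := Nat.exists_eq_add_of_le hk
        rw [claimA m]
        exact (c m).2
      · have h1 := tower_len_elts S u hu k (n - k)
        rw [show k + (n - k) = n by omega] at h1
        obtain ⟨hlen', helts⟩ := h1
        rw [helts]
        refine ⟨resFn η (u n).len, ?_, ?_⟩
        · rw [hA0]; exact hs
        · exact (resFn_take η (by omega)).symm
    obtain ⟨y, hy, hyx⟩ := hcov hηcov
    refine ⟨resFn y (u n).len, hy (u n).len, ?_⟩
    show List.zipWith (· + ·) (resFn y (u n).len) (resFn x (resFn y (u n).len).length) = s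
    apply List.ext_getElem
    · simp only [List.length_zipWith, resFn_length, min_self]
      exact ((u n).hlen s hs).symm
    · intro i h1 h2
      rw [List.getElem_zipWith, resFn_getElem, resFn_getElem]
      have hsi : s[i] = η i := by
        have hi' : i < (resFn η (u n).len).length := by
          rw [resFn_length]
          have := (u n).hlen s hs
          omega
        rw [List.getElem_of_eq hA0.symm h2, resFn_getElem]
      rw [hsi, ← congrFun hyx i]
  · -- reverse direction
    intro h η hη
    refine ⟨fun i => η i + x i, ?_, ?_⟩
    · intro m
      have hm : m ≤ (u m).len := by
        have := (tower_len_elts S u hu 0 m).1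
        rw [Nat.zero_add] at this
        omega
      obtain ⟨t, ht, htt⟩ := h m (hη m)
      simp only at htt
      have hlt : t.length = (u m).len := by
        have := congrArg List.length htt
        simp only [List.length_zipWith, resFn_length, min_self] at this
        exact this
      have ht2 : resFn (fun i => η i + x i) (u m).len = t := by
        apply List.ext_getElem
        · rw [resFn_length, hlt]
        · intro i h1 h2
          rw [resFn_getElem]
          have hz : i < (List.zipWith (· + ·) t (resFn x t.length)).length := by
            simp only [List.length_zipWith, resFn_length, min_self]
            omega
          have hr : i < (resFn η (u m).len).length := by
            rw [resFn_length]; omega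
          have h4 := congrArg (fun l => l.getD i (0 : ZMod 2)) htt
          rw [List.getD_eq_getElem _ _ hz, List.getD_eq_getElem _ _ hr,
            List.getElem_zipWith, resFn_getElem, resFn_getElem] at h4
          rw [← h4, zmod2_aa]
      have hprefix : resFn (fun i => η i + x i) m <+: t := by
        rw [resFn_take _ hm, ht2]
        exact List.take_prefix _ _
      exact hT t ht _ hprefix
    · funext i
      exact zmod2_aa (η i) (x i)
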